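/- For fixed positive reals γ, τ, λ, m, the function k ↦ 1/(1 + (γτλ + k)/(γλ(γτλ + k) + k²mλ)) is strictly increasing in k on (0, ∞), and tends to 1 as k → ∞ and to γλ/(γλ + 1) as k → 0⁺. -/
import Mathlib

open Filter

theorem dapi_per_mode_loss_in_k
    (γ τ lam m : ℝ) (hγ : 0 < γ) (hτ : 0 < τ) (hlam : 0 < lam) (hm : 0 < m) :
    StrictMonoOn (fun k : ℝ => 1 / (1 + (γ * τ * lam + k) /
        (γ * lam * (γ * τ * lam + k) + k ^ 2 * m * lam))) (Set.Ioi 0) ∧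
    Filter.Tendsto (fun k : ℝ => 1 / (1 + (γ * τ * lam + k) /
        (γ * lam * (γ * τ * lam + k) + k ^ 2 * m * lam))) Filter.atTop (nhds 1) ∧
    Filter.Tendsto (fun k : ℝ => 1 / (1 + (γ * τ * lam + k) /
        (γ * lam * (γ * τ * lam + k) + k ^ 2 * m * lam)))
      (nhdsWithin 0 (Set.Ioi 0)) (nhds (γ * lam / (γ * lam + 1))) := by
  have hA0 : 0 < γ * τ * lam := by positivity
  have hml : 0 < m * lam := by positivity
  have hD : ∀ k : ℝ, 0 ≤ k → 0 < γ * lam * (γ * τ * lam + k) + k ^ 2 * m * lam := by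
    intro k hk
    nlinarith [mul_pos hγ hlam, sq_nonneg k]
  refine ⟨?_, ?_, ?_⟩
  · intro a ha b hb hab
    simp only [Set.mem_Ioi] at ha hb
    have hDa := hD a ha.le
    have hDb := hD b hb.le
    have hNa : 0 < γ * τ * lam + a := by linarith
    have hNb : 0 < γ * τ * lam + b := by linarith
    have key : (γ * τ * lam + b) / (γ * lam * (γ * τ * lam + b) + b ^ 2 * m * lam)
        < (γ * τ * lam + a) / (γ * lam * (γ * τ * lam + a) + a ^ 2 * m * lam) := by
      rw [div_lt_div_iff₀ hDb hDa]
      have h1 : 0 < b - a := by linarith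
      have h2 : 0 < γ * τ * lam * (a + b) + a * b := by nlinarith
      nlinarith [mul_pos hml (mul_pos h1 h2)]
    have hpb : 0 < 1 + (γ * τ * lam + b) / (γ * lam * (γ * τ * lam + b) + b ^ 2 * m * lam) := by
      have := div_pos hNb hDb; linarith
    exact one_div_lt_one_div_of_lt hpb (by linarith)
  · have hr : Tendsto (fun k : ℝ => (γ * τ * lam + k) /
        (γ * lam * (γ * τ * lam + k) + k ^ 2 * m * lam)) atTop (nhds 0) := by
      have hub : Tendsto (fun k : ℝ => ((γ * τ * lam + 1) / (m * lam)) / k) atTop (nhds 0) :=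
        Tendsto.div_atTop tendsto_const_nhds tendsto_id
      refine tendsto_of_tendsto_of_tendsto_of_le_of_le' tendsto_const_nhds hub ?_ ?_
      · filter_upwards [eventually_ge_atTop (1:ℝ)] with k hk
        exact (div_pos (by linarith) (hD k (by linarith))).le
      · filter_upwards [eventually_ge_atTop (1:ℝ)] with k hk
        rw [div_div, div_le_div_iff₀ (hD k (by linarith)) (by positivity)]
        have h1 : 0 ≤ m * lam * k * (γ * τ * lam * (k - 1)) := by
          apply mul_nonneg (by positivity)
          exact mul_nonneg hA0.le (by linarith)
        nlinarith [mul_pos (mul_pos hγ hlam) (mul_pos hA0 (show (0:ℝ) < γ*τ*lam + k by linarith)),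
          mul_pos (mul_pos hγ hlam) (show (0:ℝ) < γ*τ*lam + k by linarith)]
    have h2 : Tendsto (fun k : ℝ => 1 + (γ * τ * lam + k) /
        (γ * lam * (γ * τ * lam + k) + k ^ 2 * m * lam)) atTop (nhds 1) := by
      simpa using hr.const_add 1
    have := Filter.Tendsto.div
      (tendsto_const_nhds : Tendsto (fun _ : ℝ => (1:ℝ)) atTop (nhds 1)) h2 (by norm_num)
    simpa [Pi.div_def, one_div] using this
  · have hD0 : γ * lam * (γ * τ * lam + 0) + 0 ^ 2 * m * lam ≠ 0 := by positivity
    have hcden : ContinuousAt (fun k : ℝ => 1 + (γ * τ * lam + k) /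
        (γ * lam * (γ * τ * lam + k) + k ^ 2 * m * lam)) 0 := by
      apply ContinuousAt.add continuousAt_const
      exact ContinuousAt.div (by fun_prop) (by fun_prop) hD0
    have hne : 1 + (γ * τ * lam + 0) / (γ * lam * (γ * τ * lam + 0) + 0 ^ 2 * m * lam) ≠ 0 := by
      positivity
    have hcf : ContinuousAt (fun k : ℝ => 1 / (1 + (γ * τ * lam + k) /
        (γ * lam * (γ * τ * lam + k) + k ^ 2 * m * lam))) 0 :=
      ContinuousAt.div continuousAt_const hcden hne
    have hval : 1 / (1 + (γ * τ * lam + 0) / (γ * lam * (γ * τ * lam + 0) + 0 ^ 2 * m * lam))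
        = γ * lam / (γ * lam + 1) := by
      have h1 : γ * lam * (γ * τ * lam + 0) + 0 ^ 2 * m * lam ≠ 0 := hD0
      field_simp
      ring
    have := (hcf.continuousWithinAt (s := Set.Ioi 0)).tendsto
    rwa [hval] at this
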